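/- arXiv:2507.20260 — 2 statements merged into one kernel-verified Lean document; each statement's English description precedes it below -/
import Mathlib

section
/- For n > 7, R_2(n) satisfies the recurrence R_2(n) = R_2(n-1) + R_2(n-2) - R_2(n-3). -/
/-- The `i`-th largest part (1-indexed) of a partition, or `0` if out of range. -/
def part {n : ℕ} (p : n.Partition) (i : ℕ) : ℕ :=
  (p.parts.sort (· ≥ ·)).getD (i - 1) 0

open Classical in
/-- The size of the Durfee triangle of a partition: the largest `k` such that
`λ_i ≥ k + 1 - i` for all `1 ≤ i ≤ k`. -/
noncomputable def durfee {n : ℕ} (p : n.Partition) : ℕ :=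
  Nat.findGreatest (fun k => ∀ i ∈ Finset.Icc 1 k, k + 1 ≤ part p i + i) n

open Classical in
/-- `R k n` : the number of partitions of `n` with Durfee triangle size exactly `k`. -/
noncomputable def R (k n : ℕ) : ℕ :=
  (Finset.univ.filter fun p : n.Partition => durfee p = k).card

/-- The partition function. -/
def P (n : ℕ) : ℕ := Fintype.card n.Partition

/-- The maximal Durfee triangle size among partitions of `n`. -/
noncomputable def F (n : ℕ) : ℕ := Finset.univ.sup fun p : n.Partition => durfee p

section Aux

lemma fg_congr {Q : ℕ → Prop} (i1 i2 : DecidablePred Q) (k : ℕ) :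
    @Nat.findGreatest Q i1 k = @Nat.findGreatest Q i2 k := by
  have : i1 = i2 := Subsingleton.elim _ _
  rw [this]

lemma filter_congr_inst {α : Type*} (q : α → Prop) (i1 i2 : DecidablePred q) (s : Finset α) :
    @Finset.filter _ q i1 s = @Finset.filter _ q i2 s := by
  have : i1 = i2 := Subsingleton.elim _ _
  rw [this]

lemma sort_coe {L : List ℕ} (hL : L.Pairwise (· ≥ ·)) :
    Multiset.sort (↑L : Multiset ℕ) (· ≥ ·) = L := by
  apply List.Perm.eq_of_pairwise' (Multiset.pairwise_sort _ _) hL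
  rw [← Multiset.coe_eq_coe, Multiset.sort_eq]

lemma parts_sort_eq {n : ℕ} {p : n.Partition} {L : List ℕ} (h : p.parts = ↑L)
    (hL : L.Pairwise (· ≥ ·)) : p.parts.sort (· ≥ ·) = L := by
  apply List.Perm.eq_of_pairwise' (p.parts.pairwise_sort _) hL
  rw [← Multiset.coe_eq_coe, Multiset.sort_eq, h]

lemma getD_le_head {L : List ℕ} (hL : L.Pairwise (· ≥ ·)) {x : ℕ} (hx : x ∈ L) :
    x ≤ L.getD 0 0 := by
  cases L with
  | nil => simp at hx
  | cons a t =>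
    rw [List.pairwise_cons] at hL
    rcases List.mem_cons.1 hx with h | h
    · simp [h]
    · simpa using hL.1 x h

lemma getD_eq_zero_iff {L : List ℕ} (hpos : ∀ x ∈ L, 0 < x) (i : ℕ) :
    L.getD i 0 = 0 ↔ L.length ≤ i := by
  rcases lt_or_ge i L.length with h | h
  · rw [List.getD_eq_getElem _ _ h]
    have := hpos _ (List.getElem_mem h)
    omega
  · rw [List.getD_eq_default _ _ h]
    simp [h]

lemma tail_ones {L : List ℕ} (hL : L.Pairwise (· ≥ ·)) (hpos : ∀ x ∈ L, 0 < x)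
    (hne : L ≠ []) (h2 : L.getD 1 0 ≤ 1) :
    L = L.getD 0 0 :: List.replicate (L.length - 1) 1 := by
  cases L with
  | nil => exact absurd rfl hne
  | cons a t =>
    rw [List.pairwise_cons] at hL
    have ht : t = List.replicate (t.length) 1 := by
      rw [List.eq_replicate_iff]
      refine ⟨rfl, fun x hx => ?_⟩
      have h1 : 1 ≤ x := hpos x (List.mem_cons_of_mem _ hx)
      have h2' : x ≤ t.getD 0 0 := getD_le_head hL.2 hx
      have : (a :: t).getD 1 0 = t.getD 0 0 := List.getD_cons_succ
      omega
    simp only [List.getD_cons_zero, List.length_cons]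
    rw [Nat.add_sub_cancel]
    exact congrArg (a :: ·) ht

lemma ones_twos : ∀ (L : List ℕ), L.Pairwise (· ≥ ·) → (∀ x ∈ L, x = 1 ∨ x = 2) →
    L = List.replicate (L.count 2) 2 ++ List.replicate (L.count 1) 1
  | [], _, _ => rfl
  | a :: t, hs, hm => by
    rw [List.pairwise_cons] at hs
    have ih := ones_twos t hs.2 (fun x hx => hm x (List.mem_cons_of_mem _ hx))
    rcases hm a (List.mem_cons_self) with h1 | h2
    · subst h1
      have ht : t = List.replicate (t.length) 1 := by
        rw [List.eq_replicate_iff]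
        refine ⟨rfl, fun x hx => ?_⟩
        have := hs.1 x hx
        rcases hm x (List.mem_cons_of_mem _ hx) with h | h <;> omega
      rw [ht]
      simp [List.count_replicate, List.count_cons, List.replicate_succ]
    · subst h2
      have hc2 : (2 :: t).count 2 = t.count 2 + 1 := by simp [List.count_cons]
      have hc1 : (2 :: t).count 1 = t.count 1 := by simp [List.count_cons]
      rw [hc2, hc1, List.replicate_succ, List.cons_append]
      exact congrArg (2 :: ·) ih

lemma sum_bounds : ∀ {L : List ℕ}, (∀ x ∈ L, 1 ≤ x ∧ x ≤ 2) →
    L.length ≤ L.sum ∧ L.sum ≤ 2 * L.length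
  | [], _ => by simp
  | a :: t, h => by
    have ih := sum_bounds (fun x hx => h x (List.mem_cons_of_mem _ hx))
    have ha := h a (List.mem_cons_self)
    simp only [List.length_cons, List.sum_cons]
    omega

lemma sorted_rep_rep {c2 c1 : ℕ} :
    List.Pairwise (· ≥ ·) (List.replicate c2 2 ++ List.replicate c1 1) := by
  rw [List.pairwise_append]
  refine ⟨?_, ?_, ?_⟩
  · rw [List.pairwise_replicate]; omega
  · rw [List.pairwise_replicate]; omega
  · intro x hx y hy
    rw [List.eq_of_mem_replicate hx, List.eq_of_mem_replicate hy]
    omega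

lemma sorted_cons_rep {a k : ℕ} (h : 1 ≤ a) :
    List.Pairwise (· ≥ ·) (a :: List.replicate k 1) := by
  rw [List.pairwise_cons]
  constructor
  · intro b hb; rw [List.eq_of_mem_replicate hb]; omega
  · rw [List.pairwise_replicate]; omega

lemma getD_rep_rep_zero {c2 c1 : ℕ} (h : 1 ≤ c2) :
    (List.replicate c2 2 ++ List.replicate c1 1).getD 0 0 = 2 := by
  obtain ⟨c, rfl⟩ : ∃ c, c2 = c + 1 := ⟨c2 - 1, by omega⟩
  rw [List.replicate_succ, List.cons_append, List.getD_cons_zero]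

lemma getD_rep_one {c1 : ℕ} : (List.replicate c1 (1:ℕ)).getD 0 0 ≤ 1 := by
  cases c1 with
  | zero => simp
  | succ c => rw [List.replicate_succ, List.getD_cons_zero]

lemma durfee_eq_two_iff {n : ℕ} (hn : 3 ≤ n) (p : n.Partition) :
    durfee p = 2 ↔ (2 ≤ part p 1 ∧ 1 ≤ part p 2 ∧
      (part p 1 ≤ 2 ∨ part p 2 ≤ 1 ∨ part p 3 = 0)) := by
  classical
  set Q : ℕ → Prop := fun k => ∀ i ∈ Finset.Icc 1 k, k + 1 ≤ part p i + i with hQ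
  have hmono : ∀ j k, k ≤ j → Q j → Q k := by
    intro j k hkj hj i hi
    rw [Finset.mem_Icc] at hi
    have := hj i (Finset.mem_Icc.2 ⟨hi.1, hi.2.trans hkj⟩)
    omega
  have hQ2 : Q 2 ↔ (2 ≤ part p 1 ∧ 1 ≤ part p 2) := by
    constructor
    · intro h
      have h1 := h 1 (by decide)
      have h2 := h 2 (by decide)
      omega
    · intro h i hi
      rw [Finset.mem_Icc] at hi
      obtain ⟨hi1, hi2⟩ := hi
      interval_cases i <;> omega
  have hQ3 : Q 3 ↔ (3 ≤ part p 1 ∧ 2 ≤ part p 2 ∧ 1 ≤ part p 3) := by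
    constructor
    · intro h
      have h1 := h 1 (by decide)
      have h2 := h 2 (by decide)
      have h3 := h 3 (by decide)
      omega
    · intro h i hi
      rw [Finset.mem_Icc] at hi
      obtain ⟨hi1, hi2⟩ := hi
      interval_cases i <;> omega
  have hd : durfee p = Nat.findGreatest Q n := fg_congr _ _ _
  rw [hd, Nat.findGreatest_eq_iff]
  constructor
  · rintro ⟨-, h2, h3⟩
    have hq2 := hQ2.1 (h2 (by norm_num))
    have hq3 : ¬ Q 3 := h3 (by norm_num) hn
    rw [hQ3] at hq3
    push_neg at hq3
    refine ⟨hq2.1, hq2.2, ?_⟩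
    omega
  · rintro ⟨h1, h2, h3⟩
    refine ⟨by omega, fun _ => hQ2.2 ⟨h1, h2⟩, ?_⟩
    intro k hk hkn hQk
    have : Q 3 := hmono k 3 (by omega) hQk
    rw [hQ3] at this
    omega

def canon (n a m : ℕ) : List ℕ :=
  if a ≤ 2 then List.replicate (n - m) 2 ++ List.replicate (2 * m - n) 1
  else if m ≤ 2 then [a, n - a]
  else a :: List.replicate (m - 1) 1

lemma sort_eq_canon {n : ℕ} (hn : 3 ≤ n) {p : n.Partition} (hp : durfee p = 2) :
    p.parts.sort (· ≥ ·) = canon n (part p 1) (Multiset.card p.parts) := by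
  set L := p.parts.sort (· ≥ ·) with hLdef
  have hLs : L.Pairwise (· ≥ ·) := p.parts.pairwise_sort _
  have hLc : (↑L : Multiset ℕ) = p.parts := Multiset.sort_eq _ _
  have hpos : ∀ x ∈ L, 0 < x := fun x hx => p.parts_pos (by rw [← hLc]; exact hx)
  have hsum : L.sum = n := by rw [← Multiset.sum_coe, hLc, p.parts_sum]
  have hlen : L.length = Multiset.card p.parts := Multiset.length_sort _
  rw [durfee_eq_two_iff hn] at hp
  obtain ⟨h1, h2, h3⟩ := hp
  have hp1 : part p 1 = L.getD 0 0 := rfl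
  have hp2 : part p 2 = L.getD 1 0 := rfl
  have hp3 : part p 3 = L.getD 2 0 := rfl
  clear_value L
  have hlen2 : 2 ≤ L.length := by
    by_contra h
    have := (getD_eq_zero_iff hpos 1).2 (by omega)
    rw [← hp2] at this
    omega
  by_cases ha : part p 1 ≤ 2
  · have hmem : ∀ x ∈ L, x = 1 ∨ x = 2 := by
      intro x hx
      have hle := getD_le_head hLs hx
      have hgt := hpos x hx
      omega
    have hdec := ones_twos L hLs hmem
    have hsum' : L.sum = 2 * L.count 2 + L.count 1 := by
      conv_lhs => rw [hdec]
      simp [List.sum_append, List.sum_replicate, Nat.smul_one_eq_cast]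
      ring
    have hlen' : L.length = L.count 2 + L.count 1 := by
      conv_lhs => rw [hdec]
      simp
    rw [canon, if_pos ha, ← hlen]
    have hc2 : L.count 2 = n - L.length := by omega
    have hc1 : L.count 1 = 2 * L.length - n := by omega
    rw [← hc2, ← hc1]
    exact hdec
  · rw [canon, if_neg ha, ← hlen]
    by_cases hm : L.length ≤ 2
    · have hll : L.length = 2 := by omega
      obtain ⟨x, y, rfl⟩ : ∃ x y, L = [x, y] := by
        match L, hll with
        | [x, y], _ => exact ⟨x, y, rfl⟩
      rw [if_pos hm]
      have hx : part p 1 = x := hp1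
      have hy : y = n - x := by
        simp at hsum
        omega
      rw [hx, ← hy]
    · rw [if_neg hm]
      have h3' : part p 3 ≠ 0 := by
        intro h0
        rw [hp3, getD_eq_zero_iff hpos] at h0
        omega
      have h2' : part p 2 ≤ 1 := by omega
      have := tail_ones hLs hpos (by intro h; rw [h] at hlen2; simp at hlen2) (by rw [← hp2]; omega)
      rw [hp1, ← this]

def Scode (n : ℕ) : Finset (ℕ × ℕ) :=
  ((Finset.Icc (n - n/2) (n-1)).image fun m => (2, m)) ∪
  ((Finset.Icc (n - n/2) (n-1)).image fun a => (a, 2)) ∪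
  ((Finset.Icc 3 (n-2)).image fun a => (a, n+1-a))

lemma mem_Scode {n a m : ℕ} : (a, m) ∈ Scode n ↔
    ((a = 2 ∧ n - n/2 ≤ m ∧ m ≤ n-1) ∨ (m = 2 ∧ n - n/2 ≤ a ∧ a ≤ n-1) ∨
      (3 ≤ a ∧ a ≤ n-2 ∧ m = n+1-a)) := by
  constructor
  · intro h
    simp only [Scode, Finset.mem_union, Finset.mem_image, Finset.mem_Icc, Prod.mk.injEq] at h
    rcases h with (⟨x, hx, h1, h2⟩ | ⟨x, hx, h1, h2⟩) | ⟨x, hx, h1, h2⟩ <;> omega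
  · intro h
    simp only [Scode, Finset.mem_union, Finset.mem_image, Finset.mem_Icc, Prod.mk.injEq]
    rcases h with ⟨rfl, h1, h2⟩ | ⟨rfl, h1, h2⟩ | ⟨h1, h2, rfl⟩
    · exact Or.inl (Or.inl ⟨m, ⟨h1, h2⟩, rfl, rfl⟩)
    · exact Or.inl (Or.inr ⟨a, ⟨h1, h2⟩, rfl, rfl⟩)
    · exact Or.inr ⟨a, ⟨h1, h2⟩, rfl, rfl⟩

lemma card_Scode {n : ℕ} (hn : 5 ≤ n) : (Scode n).card = 2 * (n / 2) + (n - 4) := by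
  classical
  have hinj1 : Function.Injective (fun m : ℕ => ((2, m) : ℕ × ℕ)) := by
    intro x y h; simpa using h
  have hinj2 : Function.Injective (fun a : ℕ => ((a, 2) : ℕ × ℕ)) := by
    intro x y h; simpa using h
  have hinj3 : Function.Injective (fun a : ℕ => ((a, n+1-a) : ℕ × ℕ)) := by
    intro x y h; exact (Prod.ext_iff.1 h).1
  have hd1 : Disjoint ((Finset.Icc (n - n/2) (n-1)).image fun m => ((2, m) : ℕ × ℕ))
      ((Finset.Icc (n - n/2) (n-1)).image fun a => (a, 2)) := by
    rw [Finset.disjoint_left]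
    intro x hx hy
    simp only [Finset.mem_image, Finset.mem_Icc] at hx hy
    obtain ⟨u, hu, rfl⟩ := hx
    obtain ⟨v, hv, hev⟩ := hy
    have := Prod.ext_iff.1 hev
    omega
  have hd2 : Disjoint (((Finset.Icc (n - n/2) (n-1)).image fun m => ((2, m) : ℕ × ℕ)) ∪
      ((Finset.Icc (n - n/2) (n-1)).image fun a => (a, 2)))
      ((Finset.Icc 3 (n-2)).image fun a => (a, n+1-a)) := by
    rw [Finset.disjoint_left]
    intro x hx hy
    simp only [Finset.mem_union, Finset.mem_image, Finset.mem_Icc] at hx hy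
    obtain ⟨v, hv, hev⟩ := hy
    rcases hx with ⟨u, hu, heu⟩ | ⟨u, hu, heu⟩ <;>
    · rw [← heu] at hev
      have := Prod.ext_iff.1 hev
      omega
  rw [Scode, Finset.card_union_of_disjoint hd2, Finset.card_union_of_disjoint hd1,
    Finset.card_image_of_injective _ hinj1, Finset.card_image_of_injective _ hinj2,
    Finset.card_image_of_injective _ hinj3, Nat.card_Icc, Nat.card_Icc]
  omega

lemma code_mem {n : ℕ} (hn : 5 ≤ n) {p : n.Partition} (hp : durfee p = 2) :
    (part p 1, Multiset.card p.parts) ∈ Scode n := by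
  set L := p.parts.sort (· ≥ ·) with hLdef
  have hLs : L.Pairwise (· ≥ ·) := p.parts.pairwise_sort _
  have hLc : (↑L : Multiset ℕ) = p.parts := Multiset.sort_eq _ _
  have hpos : ∀ x ∈ L, 0 < x := fun x hx => p.parts_pos (by rw [← hLc]; exact hx)
  have hsum : L.sum = n := by rw [← Multiset.sum_coe, hLc, p.parts_sum]
  have hlen : L.length = Multiset.card p.parts := Multiset.length_sort _
  rw [durfee_eq_two_iff (by omega)] at hp
  obtain ⟨h1, h2, h3⟩ := hp
  have hp1 : part p 1 = L.getD 0 0 := rfl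
  have hp2 : part p 2 = L.getD 1 0 := rfl
  have hp3 : part p 3 = L.getD 2 0 := rfl
  clear_value L
  have hlen2 : 2 ≤ L.length := by
    by_contra h
    have := (getD_eq_zero_iff hpos 1).2 (by omega)
    rw [← hp2] at this
    omega
  rw [mem_Scode]
  by_cases ha : part p 1 ≤ 2
  · -- type A
    left
    have hmem : ∀ x ∈ L, x = 1 ∨ x = 2 := by
      intro x hx
      have hle := getD_le_head hLs hx
      have hgt := hpos x hx
      omega
    have hdec := ones_twos L hLs hmem
    have hsum' : L.sum = 2 * L.count 2 + L.count 1 := by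
      conv_lhs => rw [hdec]
      simp [List.sum_append, List.sum_replicate, Nat.smul_one_eq_cast]
      ring
    have hlen' : L.length = L.count 2 + L.count 1 := by
      conv_lhs => rw [hdec]
      simp
    have h2mem : (2 : ℕ) ∈ L := by
      have h0 : 0 < L.length := by omega
      have : L.getD 0 0 ∈ L := by
        rw [List.getD_eq_getElem _ _ h0]
        exact List.getElem_mem h0
      have he : L.getD 0 0 = 2 := by omega
      rwa [he] at this
    have hc2pos : 0 < L.count 2 := List.count_pos_iff.2 h2mem
    omega
  · by_cases hm : L.length ≤ 2
    · -- type C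
      right; left
      have hll : L.length = 2 := by omega
      obtain ⟨x, y, rfl⟩ : ∃ x y, L = [x, y] := by
        match L, hll with
        | [x, y], _ => exact ⟨x, y, rfl⟩
      have hxy : y ≤ x := by
        have := getD_le_head hLs (show y ∈ [x, y] by simp)
        simpa using this
      have hy1 : 1 ≤ y := hpos y (by simp)
      simp only [List.sum_cons, List.sum_nil] at hsum
      simp only [List.length_cons, List.length_nil] at hlen
      have hx : part p 1 = x := hp1
      omega
    · -- type B
      right; right
      have h3' : part p 3 ≠ 0 := by
        intro h0
        rw [hp3, getD_eq_zero_iff hpos] at h0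
        omega
      have h2' : part p 2 ≤ 1 := by omega
      have hdec := tail_ones hLs hpos (by intro h; rw [h] at hlen2; simp at hlen2)
        (by rw [← hp2]; omega)
      have hsum' : L.getD 0 0 + (L.length - 1) = n := by
        conv_lhs at hsum => rw [hdec]
        simp only [List.sum_cons, List.sum_replicate, smul_eq_mul, mul_one] at hsum
        omega
      omega

lemma filter_card {n : ℕ} (hn : 5 ≤ n) :
    (Finset.univ.filter fun p : n.Partition => durfee p = 2).card = (Scode n).card := by
  classical
  apply Finset.card_bij (fun (p : n.Partition) _ => (part p 1, Multiset.card p.parts))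
  · intro p hp
    rw [Finset.mem_filter] at hp
    exact code_mem hn hp.2
  · intro p hp q hq heq
    rw [Finset.mem_filter] at hp hq
    rw [Prod.mk.injEq] at heq
    have h1 : p.parts.sort (· ≥ ·) = q.parts.sort (· ≥ ·) := by
      rw [sort_eq_canon (by omega) hp.2, sort_eq_canon (by omega) hq.2, heq.1, heq.2]
    have h2 : p.parts = q.parts := by
      rw [← Multiset.sort_eq p.parts (· ≥ ·), ← Multiset.sort_eq q.parts (· ≥ ·), h1]
    cases p; cases q; simpa using h2
  · rintro ⟨a, m⟩ hab
    rw [mem_Scode] at hab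
    rcases hab with ⟨rfl, hm1, hm2⟩ | ⟨rfl, ha1, ha2⟩ | ⟨ha1, ha2, rfl⟩
    · -- type A : a = 2
      set Lc : List ℕ := List.replicate (n - m) 2 ++ List.replicate (2*m - n) 1 with hLc
      have hpos : ∀ x ∈ Lc, 0 < x := by
        intro x hx
        rcases List.mem_append.1 hx with h | h <;>
          (rw [List.eq_of_mem_replicate h]; omega)
      have hsum : Lc.sum = n := by
        simp only [hLc, List.sum_append, List.sum_replicate, smul_eq_mul]
        omega
      have hlenc : Lc.length = m := by
        simp only [hLc, List.length_append, List.length_replicate]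
        omega
      have hsort : Multiset.sort (↑Lc : Multiset ℕ) (· ≥ ·) = Lc :=
        sort_coe sorted_rep_rep
      refine ⟨⟨(↑Lc : Multiset ℕ), fun {i} hi => hpos i (by simpa using hi),
        by rw [Multiset.sum_coe]; exact hsum⟩, ?_, ?_⟩
      · rw [Finset.mem_filter]
        refine ⟨Finset.mem_univ _, ?_⟩
        rw [durfee_eq_two_iff (by omega)]
        have hE1 : (Multiset.sort (↑Lc : Multiset ℕ) (· ≥ ·)).getD 0 0 = 2 := by
          rw [hsort]; exact getD_rep_rep_zero (by omega)
        have hE2 : (Multiset.sort (↑Lc : Multiset ℕ) (· ≥ ·)).getD 1 0 ≠ 0 := by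
          rw [hsort]
          intro h0
          rw [getD_eq_zero_iff hpos] at h0
          omega
        exact ⟨by show 2 ≤ (Multiset.sort (↑Lc : Multiset ℕ) (· ≥ ·)).getD 0 0; omega,
          by show 1 ≤ (Multiset.sort (↑Lc : Multiset ℕ) (· ≥ ·)).getD 1 0; omega,
          Or.inl (by show (Multiset.sort (↑Lc : Multiset ℕ) (· ≥ ·)).getD 0 0 ≤ 2; omega)⟩
      · refine Prod.ext_iff.2 ⟨?_, ?_⟩
        · show (Multiset.sort (↑Lc : Multiset ℕ) (· ≥ ·)).getD 0 0 = 2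
          rw [hsort]; exact getD_rep_rep_zero (by omega)
        · show Multiset.card (↑Lc : Multiset ℕ) = m
          simpa using hlenc
    · -- type C : m = 2
      set Lc : List ℕ := [a, n - a] with hLc
      have ha3 : 3 ≤ a := by omega
      have hna : 1 ≤ n - a := by omega
      have hsorted : Lc.Pairwise (· ≥ ·) := by
        rw [hLc, List.pairwise_cons]
        constructor
        · intro b hb; simp at hb; omega
        · simp
      have hpos : ∀ x ∈ Lc, 0 < x := by
        intro x hx; simp [hLc] at hx; rcases hx with rfl | rfl <;> omega
      have hsum : Lc.sum = n := by simp [hLc]; omega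
      have hsort : Multiset.sort (↑Lc : Multiset ℕ) (· ≥ ·) = Lc :=
        sort_coe hsorted
      refine ⟨⟨(↑Lc : Multiset ℕ), fun {i} hi => hpos i (by simpa using hi),
        by rw [Multiset.sum_coe]; exact hsum⟩, ?_, ?_⟩
      · rw [Finset.mem_filter]
        refine ⟨Finset.mem_univ _, ?_⟩
        rw [durfee_eq_two_iff (by omega)]
        refine ⟨?_, ?_, Or.inr (Or.inr ?_)⟩
        · show 2 ≤ (Multiset.sort (↑Lc : Multiset ℕ) (· ≥ ·)).getD 0 0
          rw [hsort]; simp [hLc]; omega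
        · show 1 ≤ (Multiset.sort (↑Lc : Multiset ℕ) (· ≥ ·)).getD 1 0
          rw [hsort]; simp [hLc]; omega
        · show (Multiset.sort (↑Lc : Multiset ℕ) (· ≥ ·)).getD 2 0 = 0
          rw [hsort]; simp [hLc]
      · refine Prod.ext_iff.2 ⟨?_, ?_⟩
        · show (Multiset.sort (↑Lc : Multiset ℕ) (· ≥ ·)).getD 0 0 = a
          rw [hsort]; simp [hLc]
        · show Multiset.card (↑Lc : Multiset ℕ) = 2
          simp [hLc]
    · -- type B
      set Lc : List ℕ := a :: List.replicate (n - a) 1 with hLc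
      have hna : 2 ≤ n - a := by omega
      have hsorted : Lc.Pairwise (· ≥ ·) := sorted_cons_rep (by omega)
      have hpos : ∀ x ∈ Lc, 0 < x := by
        intro x hx
        rcases List.mem_cons.1 hx with rfl | h
        · omega
        · rw [List.eq_of_mem_replicate h]; omega
      have hsum : Lc.sum = n := by
        simp [hLc, List.sum_replicate]
        omega
      have hsort : Multiset.sort (↑Lc : Multiset ℕ) (· ≥ ·) = Lc :=
        sort_coe hsorted
      refine ⟨⟨(↑Lc : Multiset ℕ), fun {i} hi => hpos i (by simpa using hi),
        by rw [Multiset.sum_coe]; exact hsum⟩, ?_, ?_⟩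
      · rw [Finset.mem_filter]
        refine ⟨Finset.mem_univ _, ?_⟩
        have hpart2 : (Multiset.sort (↑Lc : Multiset ℕ) (· ≥ ·)).getD 1 0 = 1 := by
          rw [hsort]
          obtain ⟨c, hc⟩ : ∃ c, n - a = c + 1 := ⟨n - a - 1, by omega⟩
          rw [hLc, List.getD_cons_succ, hc, List.replicate_succ, List.getD_cons_zero]
        rw [durfee_eq_two_iff (by omega)]
        refine ⟨?_, ?_, Or.inr (Or.inl ?_)⟩
        · show 2 ≤ (Multiset.sort (↑Lc : Multiset ℕ) (· ≥ ·)).getD 0 0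
          rw [hsort]; simp [hLc]; omega
        · show 1 ≤ (Multiset.sort (↑Lc : Multiset ℕ) (· ≥ ·)).getD 1 0
          omega
        · show (Multiset.sort (↑Lc : Multiset ℕ) (· ≥ ·)).getD 1 0 ≤ 1
          omega
      · refine Prod.ext_iff.2 ⟨?_, ?_⟩
        · show (Multiset.sort (↑Lc : Multiset ℕ) (· ≥ ·)).getD 0 0 = a
          rw [hsort]; simp [hLc]
        · show Multiset.card (↑Lc : Multiset ℕ) = n + 1 - a
          simp only [hLc, Multiset.coe_card, List.length_cons, List.length_replicate]
          omega

lemma R_two_eq {n : ℕ} (hn : 5 ≤ n) : R 2 n = 2 * (n / 2) + (n - 4) := by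
  classical
  have hR : R 2 n = (Finset.univ.filter fun p : n.Partition => durfee p = 2).card := by
    rw [R]
  rw [hR, filter_card hn, card_Scode hn]

end Aux

theorem R_two_recurrence (n : ℕ) (hn : 7 < n) :
    (R 2 n : ℤ) = R 2 (n - 1) + R 2 (n - 2) - R 2 (n - 3) := by
  have h0 := R_two_eq (n := n) (by omega)
  have h1 := R_two_eq (n := n - 1) (by omega)
  have h2 := R_two_eq (n := n - 2) (by omega)
  have h3 := R_two_eq (n := n - 3) (by omega)
  rw [h0, h1, h2, h3]
  omega
end

section
/- For n > 9, R_3(n) is even when n is odd and odd when n is even. -/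
section ListLemmas

/-- getD of a `≥`-sorted list of naturals is antitone. -/
lemma getD_anti {l : List ℕ} (hl : l.Pairwise (· ≥ ·)) {i j : ℕ} (hij : i ≤ j) :
    l.getD j 0 ≤ l.getD i 0 := by
  by_cases hj : j < l.length
  · have hi : i < l.length := lt_of_le_of_lt hij hj
    rw [List.getD_eq_getElem l 0 hj, List.getD_eq_getElem l 0 hi]
    rcases eq_or_lt_of_le hij with rfl | h
    · exact le_refl _
    · exact List.pairwise_iff_getElem.1 hl i j hi hj h
  · rw [List.getD_eq_default l 0 (not_lt.1 hj)]
    exact Nat.zero_le _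

/-- Galois-type fact: a `≥`-sorted list has at least `m+1` entries `≥ j` iff its
entry at index `m` is `≥ j` (for `j ≥ 1`). -/
lemma countP_galois {l : List ℕ} (hl : l.Pairwise (· ≥ ·)) {j : ℕ} (hj : 1 ≤ j) (m : ℕ) :
    m < l.countP (fun a => j ≤ a) ↔ j ≤ l.getD m 0 := by
  constructor
  · intro h
    by_contra hc
    push_neg at hc
    have hsplit : l = l.take m ++ l.drop m := (List.take_append_drop m l).symm
    have h1 : (l.take m).countP (fun a => j ≤ a) ≤ m := by
      calc (l.take m).countP (fun a => j ≤ a) ≤ (l.take m).length := List.countP_le_length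
      _ ≤ m := List.length_take_le _ _
    have h2 : (l.drop m).countP (fun a => j ≤ a) = 0 := by
      rw [List.countP_eq_zero]
      intro a ha
      obtain ⟨i, hi, rfl⟩ := List.mem_iff_getElem.1 ha
      rw [List.getElem_drop]
      have hmi : m + i < l.length := by
        have := (List.length_drop (i := m) (l := l)) ▸ hi; omega
      have : l[m + i] ≤ l.getD m 0 := by
        rw [List.getD_eq_getElem l 0 (by omega : m < l.length)]
        rcases Nat.eq_zero_or_pos i with rfl | hpos
        · simp
        · exact List.pairwise_iff_getElem.1 hl m (m+i) (by omega) hmi (by omega)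
      simp only [decide_eq_true_eq] at *
      omega
    rw [hsplit, List.countP_append, h2] at h
    omega
  · intro h
    have hm : m < l.length := by
      by_contra hc
      rw [List.getD_eq_default l 0 (not_lt.1 hc)] at h
      omega
    have hsplit : l = l.take (m+1) ++ l.drop (m+1) := (List.take_append_drop (m+1) l).symm
    have h1 : (l.take (m+1)).countP (fun a => j ≤ a) = m + 1 := by
      rw [List.countP_eq_length.2, List.length_take_of_le (by omega)]
      intro a ha
      obtain ⟨i, hi, rfl⟩ := List.mem_iff_getElem.1 ha
      rw [List.getElem_take]
      have hil : i < l.length := by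
        have := List.length_take_le (m+1) l
        have := (List.length_take (i := m+1) (l := l)); omega
      have : l.getD m 0 ≤ l[i] := by
        rw [List.getD_eq_getElem l 0 hm]
        have hi' : i ≤ m := by
          have := List.length_take (i := m+1) (l := l); omega
        rcases eq_or_lt_of_le hi' with rfl | hlt
        · exact le_refl _
        · exact List.pairwise_iff_getElem.1 hl i m hil hm hlt
      simp only [decide_eq_true_eq]
      omega
    rw [hsplit, List.countP_append, h1]
    omega

end ListLemmas

/-- number of parts that are `≥ j` -/
def cnt (s : Multiset ℕ) (j : ℕ) : ℕ := (s.filter (fun a => j ≤ a)).card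

lemma cnt_coe (l : List ℕ) (j : ℕ) : cnt (↑l) j = l.countP (fun a => j ≤ a) := by
  simp [cnt, Multiset.filter_coe, Multiset.coe_card, List.countP_eq_length_filter]

lemma sorted_sort {n : ℕ} (p : n.Partition) : (p.parts.sort (· ≥ ·)).Pairwise (· ≥ ·) :=
  Multiset.pairwise_sort _ _

lemma galois {n : ℕ} (p : n.Partition) {m j : ℕ} (hm : 1 ≤ m) (hj : 1 ≤ j) :
    m ≤ cnt p.parts j ↔ j ≤ part p m := by
  have h := (Multiset.sort_eq p.parts (· ≥ ·))
  rw [← h, cnt_coe]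
  have := (countP_galois (sorted_sort p) hj (m - 1))
  rw [part] at *
  omega

lemma part_mem {n : ℕ} (p : n.Partition) (i : ℕ) :
    part p i = 0 ∨ part p i ∈ p.parts := by
  rw [part]
  by_cases h : i - 1 < (p.parts.sort (· ≥ ·)).length
  · right
    rw [List.getD_eq_getElem _ 0 h]
    rw [← Multiset.mem_sort (· ≥ ·)]
    exact List.getElem_mem _
  · left; rw [List.getD_eq_default _ 0 (not_lt.1 h)]

lemma part_le_n {n : ℕ} (p : n.Partition) (i : ℕ) : part p i ≤ n := by
  rcases part_mem p i with h | h
  · omega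
  · exact (Multiset.single_le_sum (fun x _ => Nat.zero_le x) _ h).trans p.parts_sum.le

lemma part_anti {n : ℕ} (p : n.Partition) {i j : ℕ} (h : i ≤ j) : part p j ≤ part p i :=
  getD_anti (sorted_sort p) (by omega)

lemma cnt_cons (a : ℕ) (s : Multiset ℕ) (j : ℕ) :
    cnt (a ::ₘ s) j = cnt s j + if j ≤ a then 1 else 0 := by
  rw [cnt, cnt, Multiset.filter_cons]
  split <;> simp [add_comm]

lemma sum_cnt {n : ℕ} (s : Multiset ℕ) (hs : ∀ a ∈ s, a ≤ n) :
    ∑ j ∈ Finset.Icc 1 n, cnt s j = s.sum := by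
  induction s using Multiset.induction with
  | empty => simp [cnt]
  | cons a s ih =>
    have ha : a ≤ n := hs a (Multiset.mem_cons_self a s)
    have ih' := ih (fun x hx => hs x (Multiset.mem_cons_of_mem hx))
    simp only [cnt_cons, Finset.sum_add_distrib, ih', Multiset.sum_cons]
    have : ∑ j ∈ Finset.Icc 1 n, (if j ≤ a then 1 else 0) = a := by
      rw [← Finset.card_filter]
      have h2 : (Finset.Icc 1 n).filter (fun j => j ≤ a) = Finset.Icc 1 a := by
        ext j; simp only [Finset.mem_Icc, Finset.mem_filter]; omega
      simp [h2]
    omega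

lemma sum_filter_pos (t : Multiset ℕ) : (t.filter (fun x => 0 < x)).sum = t.sum := by
  conv_rhs => rw [← Multiset.filter_add_not (fun x => 0 < x) t]
  rw [Multiset.sum_add, Multiset.sum_eq_zero (s := t.filter (fun x => ¬ 0 < x))]
  · omega
  · intro x hx
    have := (Multiset.mem_filter.1 hx).2
    omega

lemma mem_parts_le {n : ℕ} (p : n.Partition) {a : ℕ} (ha : a ∈ p.parts) : a ≤ n :=
  (Multiset.single_le_sum (fun x _ => Nat.zero_le x) _ ha).trans p.parts_sum.le

/-- The conjugate partition. -/
def conj {n : ℕ} (p : n.Partition) : n.Partition where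
  parts := ((Finset.Icc 1 n).val.map (cnt p.parts)).filter (fun x => 0 < x)
  parts_pos := fun hi => (Multiset.mem_filter.1 hi).2
  parts_sum := by
    rw [sum_filter_pos]
    have : (((Finset.Icc 1 n).val.map (cnt p.parts))).sum = ∑ j ∈ Finset.Icc 1 n, cnt p.parts j :=
      rfl
    rw [this, sum_cnt p.parts (fun a ha => mem_parts_le p ha), p.parts_sum]

lemma cnt_conj {n : ℕ} (p : n.Partition) {j : ℕ} (hj : 1 ≤ j) :
    cnt (conj p).parts j = part p j := by
  rw [conj, cnt, Multiset.filter_filter]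
  have hfe : ∀ x ∈ ((Finset.Icc 1 n).val.map (cnt p.parts)),
      ((j ≤ x ∧ 0 < x) ↔ (j ≤ x)) := by intro x _; omega
  rw [Multiset.filter_congr hfe, Multiset.filter_map]
  rw [Multiset.card_map]
  have : Multiset.filter ((fun a => j ≤ a) ∘ cnt p.parts) (Finset.Icc 1 n).val
      = ((Finset.Icc 1 n).filter (fun m => j ≤ cnt p.parts m)).val := rfl
  rw [this, ← Finset.card, Finset.card_filter]
  have heq : ∀ m ∈ Finset.Icc 1 n, (if j ≤ cnt p.parts m then 1 else 0)
      = if m ≤ part p j then 1 else 0 := by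
    intro m hm
    have hm1 : 1 ≤ m := (Finset.mem_Icc.1 hm).1
    have hgal := galois p (m := j) (j := m) hj hm1
    by_cases h : j ≤ cnt p.parts m
    · rw [if_pos h, if_pos (hgal.1 h)]
    · rw [if_neg h, if_neg (fun hc => h (hgal.2 hc))]
  rw [Finset.sum_congr rfl heq, ← Finset.card_filter]
  have h3 : (Finset.Icc 1 n).filter (fun m => m ≤ part p j) = Finset.Icc 1 (part p j) := by
    ext m
    simp only [Finset.mem_Icc, Finset.mem_filter]
    have := part_le_n p j
    omega
  simp [h3]

lemma nat_eq_of_le_iff {a b : ℕ} (h : ∀ m, 1 ≤ m → (m ≤ a ↔ m ≤ b)) : a = b := by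
  rcases Nat.eq_zero_or_pos a with rfl | ha
  · rcases Nat.eq_zero_or_pos b with rfl | hb
    · rfl
    · have := (h b hb).2 (le_refl b); omega
  · rcases Nat.eq_zero_or_pos b with rfl | hb
    · have := (h a ha).1 (le_refl a); omega
    · have h1 := (h a ha).1 (le_refl a)
      have h2 := (h b hb).2 (le_refl b)
      omega

/-- Key symmetry property of the conjugate. -/
lemma part_conj_iff {n : ℕ} (p : n.Partition) {m j : ℕ} (hm : 1 ≤ m) (hj : 1 ≤ j) :
    j ≤ part (conj p) m ↔ m ≤ part p j := by
  rw [← galois (conj p) hm hj, cnt_conj p hj]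

/-- Count of a positive value in terms of `cnt`. -/
lemma cnt_sub_count (s : Multiset ℕ) (a : ℕ) :
    cnt s a = cnt s (a + 1) + s.count a := by
  have h := Multiset.filter_add_filter (fun x => a + 1 ≤ x) (fun x => x = a) s
  have h1 : Multiset.filter (fun x => a + 1 ≤ x ∨ x = a) s = Multiset.filter (fun x => a ≤ x) s := by
    apply Multiset.filter_congr; intro x _; constructor <;> (intro; omega)
  have h2 : Multiset.filter (fun x => (a + 1 ≤ x) ∧ x = a) s = 0 := by
    rw [Multiset.filter_eq_nil]; intro x _ ⟨h1', h2'⟩; omega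
  rw [h1, h2] at h
  have := congrArg Multiset.card h
  rw [Multiset.card_add, Multiset.card_add, Multiset.card_zero] at this
  have hc : s.count a = (Multiset.filter (fun x => x = a) s).card := by
    rw [Multiset.count_eq_card_filter_eq]
    congr 1
    apply Multiset.filter_congr; intro x _; exact eq_comm
  rw [cnt, cnt]
  omega

/-- two partitions with the same part function are equal -/
lemma partition_ext {n : ℕ} (p q : n.Partition) (h : ∀ i, 1 ≤ i → part p i = part q i) :
    p = q := by
  have hcnt : ∀ j, 1 ≤ j → cnt p.parts j = cnt q.parts j := by
    intro j hj
    apply nat_eq_of_le_iff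
    intro m hm
    rw [galois p hm hj, galois q hm hj, h m hm]
  have hcnt' : ∀ j, cnt p.parts j = cnt q.parts j := by
    intro j
    rcases Nat.eq_zero_or_pos j with rfl | hj
    · rw [cnt, cnt]
      have h1 : Multiset.filter (fun a => 0 ≤ a) p.parts = p.parts :=
        Multiset.filter_eq_self.2 (fun a _ => Nat.zero_le a)
      have h2 : Multiset.filter (fun a => 0 ≤ a) q.parts = q.parts :=
        Multiset.filter_eq_self.2 (fun a _ => Nat.zero_le a)
      rw [h1, h2]
      have h3 : Multiset.filter (fun a => 1 ≤ a) p.parts = p.parts :=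
        Multiset.filter_eq_self.2 (fun a ha => p.parts_pos ha)
      have h4 : Multiset.filter (fun a => 1 ≤ a) q.parts = q.parts :=
        Multiset.filter_eq_self.2 (fun a ha => q.parts_pos ha)
      have := hcnt 1 (le_refl 1)
      rw [cnt, cnt, h3, h4] at this
      exact this
    · exact hcnt j hj
  have : p.parts = q.parts := by
    ext a
    have e1 := cnt_sub_count p.parts a
    have e2 := cnt_sub_count q.parts a
    have e3 := hcnt' a
    have e4 := hcnt' (a + 1)
    omega
  cases p; cases q; simpa using this

lemma conj_conj {n : ℕ} (p : n.Partition) : conj (conj p) = p := by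
  apply partition_ext
  intro i hi
  apply nat_eq_of_le_iff
  intro m hm
  rw [part_conj_iff (conj p) hi hm, part_conj_iff p hm hi]

lemma durfee_eq_iff {n : ℕ} (p : n.Partition) (k : ℕ) :
    durfee p = k ↔ k ≤ n ∧ (k ≠ 0 → ∀ i ∈ Finset.Icc 1 k, k + 1 ≤ part p i + i) ∧
      ∀ ⦃m⦄, k < m → m ≤ n → ¬ (∀ i ∈ Finset.Icc 1 m, m + 1 ≤ part p i + i) := by
  rw [durfee]
  exact @Nat.findGreatest_eq_iff k n (fun k => ∀ i ∈ Finset.Icc 1 k, k + 1 ≤ part p i + i)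
    (fun k => Classical.propDecidable _)

lemma durfee_pred_conj {n : ℕ} (p : n.Partition) (k : ℕ) :
    (∀ i ∈ Finset.Icc 1 k, k + 1 ≤ part (conj p) i + i) ↔
    (∀ i ∈ Finset.Icc 1 k, k + 1 ≤ part p i + i) := by
  constructor
  · intro h i hi
    rw [Finset.mem_Icc] at hi
    have hj : k + 1 - i ∈ Finset.Icc 1 k := Finset.mem_Icc.2 (by omega)
    have h1 := h _ hj
    have h2 : i ≤ part (conj p) (k + 1 - i) := by omega
    have h3 := (part_conj_iff p (m := k + 1 - i) (j := i) (by omega) (by omega)).1 h2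
    omega
  · intro h i hi
    rw [Finset.mem_Icc] at hi
    have hj : k + 1 - i ∈ Finset.Icc 1 k := Finset.mem_Icc.2 (by omega)
    have h1 := h _ hj
    have h2 : i ≤ part p (k + 1 - i) := by omega
    have h3 := (part_conj_iff p (m := i) (j := k + 1 - i) (by omega) (by omega)).2 h2
    omega

lemma durfee_conj {n : ℕ} (p : n.Partition) : durfee (conj p) = durfee p := by
  obtain ⟨h1, h2, h3⟩ := (durfee_eq_iff p (durfee p)).1 rfl
  exact (durfee_eq_iff (conj p) (durfee p)).2
    ⟨h1, fun hk => (durfee_pred_conj p _).2 (h2 hk),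
     fun m hm hmn hc => h3 hm hmn ((durfee_pred_conj p m).1 hc)⟩

lemma durfee3_iff {n : ℕ} (hn : 9 < n) (p : n.Partition) :
    durfee p = 3 ↔ ((3 ≤ part p 1 ∧ 2 ≤ part p 2 ∧ 1 ≤ part p 3) ∧
      ¬(4 ≤ part p 1 ∧ 3 ≤ part p 2 ∧ 2 ≤ part p 3 ∧ 1 ≤ part p 4)) := by
  have hIcc3 : Finset.Icc 1 3 = ({1, 2, 3} : Finset ℕ) := rfl
  have hIcc4 : Finset.Icc 1 4 = ({1, 2, 3, 4} : Finset ℕ) := rfl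
  rw [durfee_eq_iff]
  constructor
  · rintro ⟨-, h2, h3⟩
    have hP3 := h2 (by omega)
    constructor
    · refine ⟨?_, ?_, ?_⟩
      · have := hP3 1 (by simp [hIcc3]); omega
      · have := hP3 2 (by simp [hIcc3]); omega
      · have := hP3 3 (by simp [hIcc3]); omega
    · intro ⟨c1, c2, c3, c4⟩
      refine h3 (m := 4) (by omega) (by omega) ?_
      intro i hi
      rw [hIcc4] at hi
      fin_cases hi <;> simp <;> omega
  · rintro ⟨⟨c1, c2, c3⟩, h4⟩
    refine ⟨by omega, ?_, ?_⟩
    · intro _ i hi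
      rw [hIcc3] at hi
      fin_cases hi <;> simp <;> omega
    · intro m hm hmn hc
      apply h4
      have g1 := hc 1 (Finset.mem_Icc.2 (by omega))
      have g2 := hc 2 (Finset.mem_Icc.2 (by omega))
      have g3 := hc 3 (Finset.mem_Icc.2 (by omega))
      have g4 := hc 4 (Finset.mem_Icc.2 (by omega))
      omega

lemma list_sum_getD (l : List ℕ) : ∑ i ∈ Finset.range l.length, l.getD i 0 = l.sum := by
  induction l with
  | nil => simp
  | cons a l ih =>
    rw [List.length_cons, Finset.sum_range_succ']
    simp only [List.getD_cons_succ, List.getD_cons_zero, List.sum_cons, ih]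
    omega

lemma card_parts_le {n : ℕ} (p : n.Partition) : Multiset.card p.parts ≤ n := by
  have h := Multiset.card_nsmul_le_sum (s := p.parts) (fun x hx => p.parts_pos hx)
  rw [p.parts_sum] at h
  simpa using h

lemma sum_part {n : ℕ} (p : n.Partition) : ∑ i ∈ Finset.range n, part p (i + 1) = n := by
  have hlen : (p.parts.sort (· ≥ ·)).length ≤ n := by
    rw [Multiset.length_sort]; exact card_parts_le p
  have hsum : (p.parts.sort (· ≥ ·)).sum = n := by
    have h := congrArg Multiset.sum (Multiset.sort_eq p.parts (· ≥ ·))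
    rw [Multiset.sum_coe] at h
    rw [h, p.parts_sum]
  have heq : ∀ i, part p (i + 1) = (p.parts.sort (· ≥ ·)).getD i 0 := by
    intro i; rw [part]; congr 1
  rw [Finset.sum_congr rfl (fun i _ => heq i)]
  rw [← Finset.sum_subset (Finset.range_subset_range.2 hlen)
    (fun x _ hx => List.getD_eq_default _ 0 (by simpa using hx))]
  rw [list_sum_getD, hsum]

lemma fixed_char {n : ℕ} (hn : 9 < n) (p : n.Partition) (hc : conj p = p) (hd : durfee p = 3) :
    n = 2 * part p 1 ∧ ∀ i, 1 ≤ i →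
      part p i = (if i = 1 then part p 1 else if i = 2 then 2
        else if i ≤ part p 1 then 1 else 0) := by
  have hsym : ∀ m j, 1 ≤ m → 1 ≤ j → (j ≤ part p m ↔ m ≤ part p j) := by
    intro m j hm hj
    rw [← part_conj_iff p hm hj, hc]
  obtain ⟨⟨c1, c2, c3⟩, h4⟩ := (durfee3_iff hn p).1 hd
  set a := part p 1 with ha
  -- parts beyond a are zero
  have hzero : ∀ i, a < i → part p i = 0 := by
    intro i hi
    by_contra hcon
    have h1 : 1 ≤ part p i := by omega
    have := (hsym i 1 (by omega) (le_refl 1)).1 h1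
    omega
  -- rule out a = 3
  have ha4 : 4 ≤ a := by
    rcases Nat.lt_or_ge a 4 with h | h
    · exfalso
      have ha3 : a = 3 := by omega
      have hle : ∀ i ∈ Finset.range n, part p (i + 1) ≤ (if i < 3 then 3 else 0) := by
        intro i _
        by_cases hi : i < 3
        · rw [if_pos hi]
          calc part p (i + 1) ≤ part p 1 := part_anti p (by omega)
          _ = 3 := ha3 ▸ rfl
        · rw [if_neg hi, hzero (i + 1) (by omega)]
      have hb := Finset.sum_le_sum hle
      rw [sum_part p] at hb
      have : ∑ i ∈ Finset.range n, (if i < 3 then 3 else 0) = 9 := by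
        rw [← Finset.sum_filter]
        have : (Finset.range n).filter (fun i => i < 3) = Finset.range 3 := by
          ext i; simp [Finset.mem_filter, Finset.mem_range]; omega
        rw [this]; rfl
      omega
    · exact h
  -- part p 4 ≥ 1
  have hp4 : 1 ≤ part p 4 := (hsym 4 1 (by omega) (le_refl 1)).2 (by omega)
  -- part p 2 = 2
  have hp2 : part p 2 = 2 := by
    rcases Nat.lt_or_ge (part p 2) 3 with h | h
    · omega
    · exfalso
      have hp3 : 2 ≤ part p 3 := (hsym 3 2 (by omega) (by omega)).2 h
      exact h4 ⟨by omega, h, hp3, hp4⟩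
  -- part p 3 = 1
  have hp3 : part p 3 = 1 := by
    rcases Nat.lt_or_ge (part p 3) 2 with h | h
    · omega
    · exfalso
      have := (hsym 3 2 (by omega) (by omega)).1 h
      omega
  -- middle parts equal 1
  have hmid : ∀ i, 3 ≤ i → i ≤ a → part p i = 1 := by
    intro i h3 hia
    have hle : part p i ≤ part p 3 := part_anti p h3
    have hge : 1 ≤ part p i := (hsym i 1 (by omega) (le_refl 1)).2 hia
    omega
  constructor
  · -- sum computation
    have hparts : ∀ i ∈ Finset.range n, part p (i + 1) =
        (if i = 0 then a else 0) + (if i = 1 then 2 else 0)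
          + (if 2 ≤ i ∧ i + 1 ≤ a then 1 else 0) := by
      intro i _
      rcases Nat.eq_zero_or_pos i with rfl | h0
      · simp [ha]
      rcases Nat.lt_or_ge i 2 with h1 | h1
      · have : i = 1 := by omega
        subst this; simpa using hp2
      rcases Nat.lt_or_ge i a with h2 | h2
      · rw [hmid (i + 1) (by omega) (by omega)]
        rw [if_neg (by omega), if_neg (by omega), if_pos (by omega)]
      · rw [hzero (i + 1) (by omega)]
        rw [if_neg (by omega), if_neg (by omega), if_neg (by omega)]
    have hsum := sum_part p
    rw [Finset.sum_congr rfl hparts] at hsum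
    rw [Finset.sum_add_distrib, Finset.sum_add_distrib] at hsum
    have e1 : ∑ i ∈ Finset.range n, (if i = 0 then a else 0) = a := by
      rw [Finset.sum_ite_eq' (Finset.range n) 0 (fun _ => a), if_pos (by simp; omega)]
    have e2 : ∑ i ∈ Finset.range n, (if i = 1 then 2 else 0) = 2 := by
      rw [Finset.sum_ite_eq' (Finset.range n) 1 (fun _ => 2), if_pos (by simp; omega)]
    have e3 : ∑ i ∈ Finset.range n, (if 2 ≤ i ∧ i + 1 ≤ a then 1 else 0) = a - 2 := by
      rw [← Finset.sum_filter]
      have hf : (Finset.range n).filter (fun i => 2 ≤ i ∧ i + 1 ≤ a) = Finset.Ico 2 a := by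
        ext i
        simp only [Finset.mem_filter, Finset.mem_range, Finset.mem_Ico]
        have := part_le_n p 1
        omega
      rw [hf]
      simp [Nat.card_Ico]
    rw [e1, e2, e3] at hsum  -- e1 may be garbage; fix below
    omega
  · intro i hi
    rcases Nat.eq_or_lt_of_le hi with h1 | h1
    · subst h1; rw [if_pos rfl]
    rcases Nat.lt_or_ge i 3 with h2 | h2
    · have : i = 2 := by omega
      subst this
      rw [if_neg (by omega), if_pos rfl]; exact hp2
    rcases le_or_gt i a with h3 | h3
    · rw [if_neg (by omega), if_neg (by omega), if_pos h3]
      exact hmid i h2 h3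
    · rw [if_neg (by omega), if_neg (by omega), if_neg (by omega)]
      exact hzero i h3

section Qn

lemma replicate_getD (k m : ℕ) : (List.replicate k (1:ℕ)).getD m 0 = if m < k then 1 else 0 := by
  by_cases h : m < k
  · rw [if_pos h, List.getD_eq_getElem _ 0 (by simpa using h), List.getElem_replicate]
  · rw [if_neg h, List.getD_eq_default _ 0 (by simpa using h)]

/-- The unique self-conjugate partition of `n = 2a` with Durfee triangle size 3. -/
def qn {n : ℕ} (a : ℕ) (ha : 2 ≤ a) (h : n = 2 * a) : n.Partition where
  parts := a ::ₘ 2 ::ₘ Multiset.replicate (a - 2) 1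
  parts_pos := by
    intro i hi
    rcases Multiset.mem_cons.1 hi with rfl | hi
    · omega
    rcases Multiset.mem_cons.1 hi with rfl | hi
    · omega
    · rw [Multiset.eq_of_mem_replicate hi]; omega
  parts_sum := by
    rw [Multiset.sum_cons, Multiset.sum_cons, Multiset.sum_replicate]
    simp only [smul_eq_mul, mul_one]
    omega

lemma qn_sort {n : ℕ} (a : ℕ) (ha : 2 ≤ a) (h : n = 2 * a) :
    (qn a ha h).parts.sort (· ≥ ·) = a :: 2 :: List.replicate (a - 2) 1 := by
  refine List.Perm.eq_of_pairwise' (r := (· ≥ ·)) ?_ ?_ ?_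
  rotate_right
  · rw [← Multiset.coe_eq_coe, Multiset.sort_eq]
    show (qn a ha h).parts = ((a :: 2 :: List.replicate (a - 2) 1 : List ℕ) : Multiset ℕ)
    show a ::ₘ 2 ::ₘ Multiset.replicate (a - 2) 1 = _
    rw [← Multiset.cons_coe, ← Multiset.cons_coe, Multiset.coe_replicate]
  · exact Multiset.pairwise_sort _ _
  · rw [List.pairwise_cons, List.pairwise_cons]
    refine ⟨?_, ?_, ?_⟩
    · intro b hb
      rcases List.mem_cons.1 hb with rfl | hb
      · omega
      · rw [List.eq_of_mem_replicate hb]; omega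
    · intro b hb
      rw [List.eq_of_mem_replicate hb]; omega
    · exact List.pairwise_replicate.mpr (Or.inr (le_refl 1))

lemma part_qn {n : ℕ} (a : ℕ) (ha : 2 ≤ a) (h : n = 2 * a) (i : ℕ) (hi : 1 ≤ i) :
    part (qn a ha h) i = (if i = 1 then a else if i = 2 then 2
      else if i ≤ a then 1 else 0) := by
  rw [part, qn_sort a ha h]
  rcases Nat.eq_or_lt_of_le hi with h1 | h1
  · subst h1; simp
  rcases Nat.lt_or_ge i 3 with h2 | h2
  · have : i = 2 := by omega
    subst this; simp
  · have : i - 1 = (i - 3) + 2 := by omega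
    rw [this, List.getD_cons_succ, List.getD_cons_succ, replicate_getD]
    rw [if_neg (show ¬ i = 1 by omega), if_neg (show ¬ i = 2 by omega)]
    split_ifs <;> omega

end Qn

lemma durfee_qn {n : ℕ} (hn : 9 < n) (a : ℕ) (ha : 2 ≤ a) (h : n = 2 * a) :
    durfee (qn a ha h) = 3 := by
  rw [durfee3_iff hn]
  have p1 := part_qn a ha h 1 (by omega)
  have p2 := part_qn a ha h 2 (by omega)
  have p3 := part_qn a ha h 3 (by omega)
  rw [if_pos rfl] at p1
  rw [if_neg (by omega), if_pos rfl] at p2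
  rw [if_neg (by omega), if_neg (by omega), if_pos (by omega)] at p3
  refine ⟨⟨by omega, by omega, by omega⟩, ?_⟩
  rintro ⟨-, hc, -, -⟩
  omega

lemma conj_qn {n : ℕ} (hn : 9 < n) (a : ℕ) (ha : 2 ≤ a) (h : n = 2 * a) :
    conj (qn a ha h) = qn a ha h := by
  apply partition_ext
  intro i hi
  apply nat_eq_of_le_iff
  intro m hm
  rw [part_conj_iff _ hi hm]
  rw [part_qn a ha h i hi, part_qn a ha h m hm]
  have ha5 : 5 ≤ a := by omega
  split_ifs <;> omega

lemma invol_parity {α : Type*} [DecidableEq α] (f : α → α) (s : Finset α) :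
    (∀ x ∈ s, f x ∈ s) → (∀ x ∈ s, f (f x) = x) →
    (s.filter fun x => f x = x).card ≡ s.card [MOD 2] := by
  induction s using Finset.strongInduction with
  | _ s ih =>
    intro hmap hinv
    by_cases hfix : ∀ x ∈ s, f x = x
    · rw [Finset.filter_true_of_mem hfix]
    · push_neg at hfix
      obtain ⟨x, hxs, hfx⟩ := hfix
      have hfxs : f x ∈ s := hmap x hxs
      have hsub : ({x, f x} : Finset α) ⊆ s := by
        intro y hy
        rcases Finset.mem_insert.1 hy with rfl | hy
        · exact hxs
        · rw [Finset.mem_singleton.1 hy]; exact hfxs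
      have hxnefx : x ≠ f x := fun hh => hfx hh.symm
      set t := s \ {x, f x} with ht
      have htsub : t ⊂ s := Finset.sdiff_ssubset hsub (by simp)
      have hcard2 : ({x, f x} : Finset α).card = 2 := Finset.card_pair hxnefx
      have hcard : s.card = t.card + 2 := by
        rw [ht, Finset.card_sdiff_of_subset hsub, hcard2]
        have := Finset.card_le_card hsub
        omega
      have hmapt : ∀ y ∈ t, f y ∈ t := by
        intro y hy
        rw [ht, Finset.mem_sdiff] at hy ⊢
        obtain ⟨hys, hyn⟩ := hy
        simp only [Finset.mem_insert, Finset.mem_singleton] at hyn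
        push_neg at hyn
        refine ⟨hmap y hys, ?_⟩
        simp only [Finset.mem_insert, Finset.mem_singleton]
        push_neg
        constructor
        · intro hh
          apply hyn.2
          rw [← hinv y hys, hh]
        · intro hh
          apply hyn.1
          rw [← hinv y hys, hh, hinv x hxs]
      have hinvt : ∀ y ∈ t, f (f y) = y := fun y hy => hinv y (Finset.mem_sdiff.1 hy).1
      have hfilter : s.filter (fun x => f x = x) = t.filter (fun x => f x = x) := by
        ext y
        simp only [Finset.mem_filter, ht, Finset.mem_sdiff, Finset.mem_insert,
          Finset.mem_singleton]
        constructor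
        · rintro ⟨hys, hfy⟩
          refine ⟨⟨hys, ?_⟩, hfy⟩
          push_neg
          constructor
          · rintro rfl; exact hfx hfy
          · rintro rfl
            apply hfx
            rw [← hfy, hinv x hxs]
        · rintro ⟨⟨hys, _⟩, hfy⟩
          exact ⟨hys, hfy⟩
      have hmod := ih t htsub hmapt hinvt
      rw [hfilter, hcard]
      simp only [Nat.ModEq] at hmod ⊢
      omega

theorem R_three_parity (n : ℕ) (hn : 9 < n) :
    (Odd n → Even (R 3 n)) ∧ (Even n → Odd (R 3 n)) := by
  classical
  set S := (Finset.univ.filter fun p : n.Partition => durfee p = 3) with hS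
  have hR : R 3 n = S.card := by
    rw [hS]
    unfold R
    congr 1
  have hmap : ∀ p ∈ S, conj p ∈ S := by
    intro p hp
    rw [hS, Finset.mem_filter] at hp ⊢
    exact ⟨Finset.mem_univ _, by rw [durfee_conj]; exact hp.2⟩
  have hinv : ∀ p ∈ S, conj (conj p) = p := fun p _ => conj_conj p
  have hpar := invol_parity conj S hmap hinv
  constructor
  · intro hodd
    obtain ⟨k, hk⟩ := hodd
    have hempty : S.filter (fun p => conj p = p) = ∅ := by
      rw [Finset.filter_eq_empty_iff]
      intro p hp hc
      rw [hS, Finset.mem_filter] at hp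
      obtain ⟨h1, -⟩ := fixed_char hn p hc hp.2
      omega
    rw [hempty] at hpar
    rw [Finset.card_empty] at hpar
    rw [hR, Nat.even_iff]
    simp only [Nat.ModEq] at hpar
    omega
  · intro heven
    obtain ⟨k, hk⟩ := heven
    have h2a : n = 2 * (n / 2) := by omega
    have ha2 : 2 ≤ n / 2 := by omega
    have hq : S.filter (fun p => conj p = p) = {qn (n/2) ha2 h2a} := by
      ext p
      simp only [Finset.mem_filter, Finset.mem_singleton, hS, Finset.mem_univ, true_and]
      constructor
      · rintro ⟨hd, hc⟩
        obtain ⟨h1, h2⟩ := fixed_char hn p hc hd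
        have hpa : part p 1 = n / 2 := by omega
        apply partition_ext
        intro i hi
        rw [h2 i hi, part_qn (n/2) ha2 h2a i hi, hpa]
      · rintro rfl
        exact ⟨durfee_qn hn _ ha2 h2a, conj_qn hn _ ha2 h2a⟩
    rw [hq, Finset.card_singleton] at hpar
    rw [hR, Nat.odd_iff]
    simp only [Nat.ModEq] at hpar
    omega
end
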